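/- Let C = [[2,1],[1,1]] over ℤ and let Lₖ be the Lucas numbers (L₀=2, L₁=1, L_{k+2}=L_{k+1}+L_k). Then for all n ≥ 1, det(C^n − I) = 2 − L_{2n}, and hence |det(C^n − I)| = L_{2n} − 2. -/
import Mathlib


def lucas : ℕ → ℤ
  | 0 => 2
  | 1 => 1
  | k + 2 => lucas (k + 1) + lucas k

lemma lucas_pos : ∀ k, 1 ≤ lucas k
  | 0 => by norm_num [lucas]
  | 1 => by norm_num [lucas]
  | k + 2 => by
      have h1 := lucas_pos k
      have h2 := lucas_pos (k + 1)
      show 1 ≤ lucas (k+1) + lucas k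
      omega

lemma trace_pow : ∀ n : ℕ,
    Matrix.trace ((!![2, 1; 1, 1] : Matrix (Fin 2) (Fin 2) ℤ) ^ n) = lucas (2 * n)
  | 0 => by simp [lucas, Matrix.trace_fin_two]
  | 1 => by
      show Matrix.trace (_ ^ 1) = lucas 2
      simp [lucas, Matrix.trace_fin_two]
  | n + 2 => by
      have h1 := trace_pow n
      have h2 := trace_pow (n + 1)
      set C : Matrix (Fin 2) (Fin 2) ℤ := !![2, 1; 1, 1] with hC
      have hsq : C ^ 2 = 3 • C - 1 := by
        rw [hC]
        ext i j
        fin_cases i <;> fin_cases j <;>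
          simp [pow_two, Matrix.mul_apply, Fin.sum_univ_succ, Matrix.one_apply] <;> norm_num
      have hrec : C ^ (n + 2) = 3 • C ^ (n + 1) - C ^ n := by
        calc C ^ (n + 2) = C ^ n * C ^ 2 := by rw [pow_add]
        _ = C ^ n * (3 • C - 1) := by rw [hsq]
        _ = 3 • (C ^ n * C) - C ^ n := by
              rw [Matrix.mul_sub, Matrix.mul_smul, Matrix.mul_one]
        _ = 3 • C ^ (n + 1) - C ^ n := by rw [← pow_succ]
      rw [hrec]
      have hl : lucas (2 * (n + 2)) = 3 * lucas (2 * (n + 1)) - lucas (2 * n) := by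
        have e1 : 2 * (n + 2) = (2 * n + 2) + 2 := by ring
        have e2 : 2 * (n + 1) = 2 * n + 2 := by ring
        rw [e1, e2]
        show lucas (2*n+2+1) + lucas (2*n+2) = 3 * lucas (2*n+2) - lucas (2*n)
        have : lucas (2*n+2+1) = lucas (2*n+2) + lucas (2*n+1) := rfl
        have h3 : lucas (2*n+2) = lucas (2*n+1) + lucas (2*n) := rfl
        omega
      rw [Matrix.trace_sub, Matrix.trace_smul, h1, h2, hl]
      simp

theorem stmt_15 (n : ℕ) (hn : 1 ≤ n) :
    ((!![2, 1; 1, 1] : Matrix (Fin 2) (Fin 2) ℤ) ^ n - 1).det = 2 - lucas (2 * n) ∧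
      |((!![2, 1; 1, 1] : Matrix (Fin 2) (Fin 2) ℤ) ^ n - 1).det| = lucas (2 * n) - 2 := by
  set C : Matrix (Fin 2) (Fin 2) ℤ := !![2, 1; 1, 1] with hC
  have hdet : (C ^ n).det = 1 := by
    rw [Matrix.det_pow, hC, Matrix.det_fin_two_of]
    norm_num
  have htr := trace_pow n
  have key : (C ^ n - 1).det = (C ^ n).det - Matrix.trace (C ^ n) + 1 := by
    rw [Matrix.det_fin_two, Matrix.det_fin_two, Matrix.trace_fin_two]
    simp [Matrix.sub_apply, Matrix.one_apply]
    ring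
  have h1 : (C ^ n - 1).det = 2 - lucas (2 * n) := by
    rw [key, hdet, htr]; ring
  refine ⟨h1, ?_⟩
  rw [h1]
  have : 2 * n = (2 * n - 2) + 2 := by omega
  have hL : 2 ≤ lucas (2 * n) := by
    rw [this]
    have a := lucas_pos (2 * n - 2)
    have b := lucas_pos (2 * n - 2 + 1)
    show 2 ≤ lucas (2*n-2+1) + lucas (2*n-2)
    omega
  rw [abs_sub_comm]
  exact abs_of_nonneg (by omega)
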